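/- Any randomized decision tree computing MAJORITY on N bits with zero-sided error at most 1/2 has cost at least N. -/

import Mathlib

/-- A classical decision tree querying single input bits, whose leaves may
output a Boolean answer or "I don't know" (`none`). -/
inductive ODTree (N : ℕ) where
  | leaf (b : Option Bool)
  | node (i : Fin N) (t0 t1 : ODTree N)

/-- Evaluation of a decision tree on an input. -/
def ODTree.eval {N : ℕ} : ODTree N → (Fin N → Bool) → Option Bool
  | .leaf b, _ => b
  | .node i t0 t1, X => if X i then t1.eval X else t0.eval X

/-- Cost (worst-case number of queries = depth) of a decision tree. -/
def ODTree.cost {N : ℕ} : ODTree N → ℕ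
  | .leaf _ => 0
  | .node _ t0 t1 => 1 + max t0.cost t1.cost

namespace ODTreeAux

variable {N : ℕ}

def maj (X : Fin N → Bool) : Bool :=
  decide ((Finset.univ.filter fun i => X i = false).card ≤
          (Finset.univ.filter fun i => X i = true).card)

def cT (X : Fin N → Bool) : ℕ := (Finset.univ.filter fun i => X i = true).card

def Agr (ρ : Fin N → Option Bool) (X : Fin N → Bool) : Prop :=
  ∀ i v, ρ i = some v → X i = v

instance (ρ : Fin N → Option Bool) : DecidablePred (Agr ρ) := fun X =>
  inferInstanceAs (Decidable (∀ i v, ρ i = some v → X i = v))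

def free (ρ : Fin N → Option Bool) : ℕ :=
  (Finset.univ.filter fun i => ρ i = none).card

def fixT (ρ : Fin N → Option Bool) : ℕ :=
  (Finset.univ.filter fun i => ρ i = some true).card

def phi (n : ℕ) (k : ℤ) : ℕ := if k < 0 then 0 else n.choose k.toNat

lemma phi_pascal (n : ℕ) (k : ℤ) : phi (n+1) k = phi n k + phi n (k-1) := by
  unfold phi
  rcases lt_trichotomy k 0 with h | h | h
  · rw [if_pos h, if_pos h, if_pos (by omega)]
  · subst h; norm_num
  · rw [if_neg (by omega), if_neg (by omega), if_neg (by omega)]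
    have h1 : k.toNat = (k-1).toNat + 1 := by omega
    rw [h1, Nat.choose_succ_succ']
    omega

lemma phi_zero (n : ℕ) : phi n 0 = 1 := by simp [phi]

lemma phi_self (n : ℕ) : phi n n = 1 := by simp [phi]

lemma cT_add (X : Fin N → Bool) :
    cT X + (Finset.univ.filter fun i => X i = false).card = N := by
  have h := Finset.card_filter_add_card_filter_not
    (s := (Finset.univ : Finset (Fin N))) (p := fun i => X i = true)
  simpa [cT, Bool.not_eq_true] using h

lemma free_le (ρ : Fin N → Option Bool) : free ρ ≤ N := by
  simpa [free] using Finset.card_filter_le Finset.univ (fun i => ρ i = none)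

lemma maj_true_iff (X : Fin N → Bool) : maj X = true ↔ N - cT X ≤ cT X := by
  have h := cT_add X
  simp only [cT] at h ⊢
  simp only [maj, decide_eq_true_eq]
  omega


lemma fixT_le_cT {ρ : Fin N → Option Bool} {Y : Fin N → Bool} (h : Agr ρ Y) :
    fixT ρ ≤ cT Y := by
  apply Finset.card_le_card
  intro i hi
  simp only [Finset.mem_filter, Finset.mem_univ, true_and] at *
  exact h i true hi

lemma filter_or_card (ρ : Fin N → Option Bool) :
    (Finset.univ.filter fun i => ρ i = some true ∨ ρ i = none).card = fixT ρ + free ρ := by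
  rw [Finset.filter_or, Finset.card_union_of_disjoint]
  · rfl
  · rw [Finset.disjoint_left]
    intro i hi1 hi2
    simp only [Finset.mem_filter] at hi1 hi2
    rw [hi1.2] at hi2
    exact nomatch hi2.2

lemma trues_subset_or {ρ : Fin N → Option Bool} {Y : Fin N → Bool} (h : Agr ρ Y) :
    (Finset.univ.filter fun i => Y i = true) ⊆
      (Finset.univ.filter fun i => ρ i = some true ∨ ρ i = none) := by
  intro i hi
  simp only [Finset.mem_filter, Finset.mem_univ, true_and] at *
  cases hρ : ρ i with
  | none => exact Or.inr rfl
  | some v =>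
    left
    have hYv := h i v hρ
    cases v
    · rw [hYv] at hi; exact Bool.noConfusion hi
    · rfl

lemma cT_le_of_agr {ρ : Fin N → Option Bool} {Y : Fin N → Bool} (h : Agr ρ Y) :
    cT Y ≤ fixT ρ + free ρ := by
  rw [← filter_or_card ρ]
  exact Finset.card_le_card (trues_subset_or h)

lemma main_bound (T : ODTree N) (t : ℕ) (ht1 : N ≤ 2*t) (ht2 : 2*t ≤ N+1)
    (ρ : Fin N → Option Bool)
    (hnw : ∀ X, Agr ρ X → T.eval X = some (maj X) ∨ T.eval X = none)
    (hd : T.cost < free ρ) :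
    (Finset.univ.filter fun X => Agr ρ X ∧ (cT X = t ∨ cT X = t - 1) ∧ T.eval X ≠ none).card
      ≤ phi (free ρ - 1) ((t:ℤ) - fixT ρ) + phi (free ρ - 1) ((t:ℤ) - fixT ρ - 2) := by
  induction T generalizing ρ with
  | leaf b =>
    match b with
    | none => simp [ODTree.eval]
    | some c =>
      rcases Finset.eq_empty_or_nonempty
        (Finset.univ.filter fun X => Agr ρ X ∧ (cT X = t ∨ cT X = t - 1) ∧
          (ODTree.leaf (N := N) (some c)).eval X ≠ none) with hS | ⟨X, hX⟩
      · rw [hS]; simp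
      simp only [Finset.mem_filter, Finset.mem_univ, true_and] at hX
      obtain ⟨hAgrX, hlvlX, -⟩ := hX
      have hmaj : ∀ Y, Agr ρ Y → maj Y = c := by
        intro Y hY
        rcases hnw Y hY with h | h
        · simp only [ODTree.eval, Option.some.injEq] at h
          exact h.symm
        · simp [ODTree.eval] at h
      have hfree1 : 1 ≤ free ρ := by
        have : (ODTree.leaf (N := N) (some c)).cost = 0 := rfl
        omega
      have hNpos : 1 ≤ N := le_trans hfree1 (free_le ρ)
      have hfixX := fixT_le_cT hAgrX
      cases c with
      | true =>
        have hAgrlo : Agr ρ (fun i => (ρ i).getD false) := by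
          intro i v h; simp [h]
        have hcTlo : cT (fun i => (ρ i).getD false) = fixT ρ := by
          unfold cT fixT
          congr 1
          apply Finset.filter_congr
          intro i _
          cases h : ρ i with
          | none => simp [h]
          | some v => cases v <;> simp [h]
        have hforced : N ≤ 2 * fixT ρ := by
          have h1 := (maj_true_iff _).mp (hmaj _ hAgrlo)
          omega
        have hfixt : fixT ρ = t := by rcases hlvlX with h | h <;> omega
        have hone : phi (free ρ - 1) ((t:ℤ) - fixT ρ) = 1 := by
          rw [hfixt]; simp [phi_zero]
        have hsub : (Finset.univ.filter fun X => Agr ρ X ∧ (cT X = t ∨ cT X = t - 1) ∧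
            (ODTree.leaf (N := N) (some true)).eval X ≠ none) ⊆ {fun i => (ρ i).getD false} := by
          intro Y hY
          simp only [Finset.mem_filter, Finset.mem_univ, true_and] at hY
          obtain ⟨hAgrY, hlvlY, -⟩ := hY
          have hfixY := fixT_le_cT hAgrY
          have hcTY : cT Y = t := by rcases hlvlY with h | h <;> omega
          have heq : (Finset.univ.filter fun i => ρ i = some true) =
              (Finset.univ.filter fun i => Y i = true) := by
            apply Finset.eq_of_subset_of_card_le
            · intro i hi
              simp only [Finset.mem_filter, Finset.mem_univ, true_and] at *
              exact hAgrY i true hi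
            · show cT Y ≤ fixT ρ
              omega
          simp only [Finset.mem_singleton]
          funext i
          cases h : ρ i with
          | some v => simp [hAgrY i v h, h]
          | none =>
            simp only [h, Option.getD_none]
            by_contra hcon
            rw [Bool.not_eq_false] at hcon
            have : i ∈ Finset.univ.filter fun i => ρ i = some true := by
              rw [heq]
              simp [hcon]
            simp only [Finset.mem_filter] at this
            rw [h] at this
            exact nomatch this.2
        calc (Finset.univ.filter fun X => Agr ρ X ∧ (cT X = t ∨ cT X = t - 1) ∧
            (ODTree.leaf (N := N) (some true)).eval X ≠ none).card
            ≤ 1 := by simpa using Finset.card_le_card hsub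
          _ ≤ _ := by rw [hone]; exact Nat.le_add_right 1 _
      | false =>
        have hAgrhi : Agr ρ (fun i => (ρ i).getD true) := by
          intro i v h; simp [h]
        have hcThi : cT (fun i => (ρ i).getD true) = fixT ρ + free ρ := by
          rw [← filter_or_card ρ]
          unfold cT
          congr 1
          apply Finset.filter_congr
          intro i _
          cases h : ρ i with
          | none => simp [h]
          | some v => cases v <;> simp [h]
        have hforced : 2 * (fixT ρ + free ρ) < N := by
          have h1 := hmaj _ hAgrhi
          have h2 : ¬ (N - cT (fun i => (ρ i).getD true) ≤ cT (fun i => (ρ i).getD true)) := by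
            intro hc
            rw [(maj_true_iff _).mpr hc] at h1
            exact Bool.noConfusion h1
          have h3 : cT (fun i => (ρ i).getD true) ≤ N := by
            have := cT_add (fun i => (ρ i).getD true)
            omega
          omega
        have hcTXle := cT_le_of_agr hAgrX
        have hteq : (t:ℕ) = fixT ρ + free ρ + 1 := by rcases hlvlX with h | h <;> omega
        have hone : phi (free ρ - 1) ((t:ℤ) - fixT ρ - 2) = 1 := by
          have : ((t:ℤ) - fixT ρ - 2) = ((free ρ - 1 : ℕ) : ℤ) := by
            omega
          rw [this, phi_self]
        have hsub : (Finset.univ.filter fun X => Agr ρ X ∧ (cT X = t ∨ cT X = t - 1) ∧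
            (ODTree.leaf (N := N) (some false)).eval X ≠ none) ⊆ {fun i => (ρ i).getD true} := by
          intro Y hY
          simp only [Finset.mem_filter, Finset.mem_univ, true_and] at hY
          obtain ⟨hAgrY, hlvlY, -⟩ := hY
          have hcTYle := cT_le_of_agr hAgrY
          have hcTY : cT Y = fixT ρ + free ρ := by rcases hlvlY with h | h <;> omega
          have heq : (Finset.univ.filter fun i => Y i = true) =
              (Finset.univ.filter fun i => ρ i = some true ∨ ρ i = none) := by
            apply Finset.eq_of_subset_of_card_le (trues_subset_or hAgrY)
            rw [filter_or_card ρ, ← hcTY]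
            exact le_refl _
          simp only [Finset.mem_singleton]
          funext i
          cases h : ρ i with
          | some v => simp [hAgrY i v h, h]
          | none =>
            simp only [h, Option.getD_none]
            have : i ∈ Finset.univ.filter fun j => Y j = true := by
              rw [heq]
              simp [h]
            simp only [Finset.mem_filter] at this
            exact this.2
        calc (Finset.univ.filter fun X => Agr ρ X ∧ (cT X = t ∨ cT X = t - 1) ∧
            (ODTree.leaf (N := N) (some false)).eval X ≠ none).card
            ≤ 1 := by simpa using Finset.card_le_card hsub
          _ ≤ _ := by rw [hone]; exact Nat.le_add_left 1 _
  | node i t0 t1 ih0 ih1 =>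
    have hd' : 1 + max t0.cost t1.cost < free ρ := hd
    cases hρi : ρ i with
    | some v =>
      have hev : ∀ X, Agr ρ X → (ODTree.node i t0 t1).eval X =
          (if v then t1 else t0).eval X := by
        intro X h
        have hXi : X i = v := h i v hρi
        cases v <;> simp [ODTree.eval, hXi]
      have hfe : (Finset.univ.filter fun X => Agr ρ X ∧ (cT X = t ∨ cT X = t - 1) ∧
            (ODTree.node i t0 t1).eval X ≠ none)
          = (Finset.univ.filter fun X => Agr ρ X ∧ (cT X = t ∨ cT X = t - 1) ∧
            (if v then t1 else t0).eval X ≠ none) := by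
        apply Finset.filter_congr
        intro X _
        constructor
        · rintro ⟨h1, h2, h3⟩
          exact ⟨h1, h2, by rwa [hev X h1] at h3⟩
        · rintro ⟨h1, h2, h3⟩
          exact ⟨h1, h2, by rw [hev X h1]; exact h3⟩
      rw [hfe]
      have hnw' : ∀ X, Agr ρ X → (if v then t1 else t0).eval X = some (maj X) ∨
          (if v then t1 else t0).eval X = none := by
        intro X h
        rw [← hev X h]
        exact hnw X h
      cases v
      · exact ih0 ρ hnw' (by show t0.cost < free ρ; omega)
      · exact ih1 ρ hnw' (by show t1.cost < free ρ; omega)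
    | none =>
      have hfilt : ∀ w : Bool, (Finset.univ.filter fun j =>
            Function.update ρ i (some w) j = none)
          = (Finset.univ.filter fun j => ρ j = none).erase i := by
        intro w
        ext j
        rcases eq_or_ne j i with rfl | hji
        · simp [Function.update_self]
        · simp [Function.update_of_ne hji, hji]
      have hifree : i ∈ Finset.univ.filter fun j => ρ j = none := by simp [hρi]
      have hfree_v : ∀ w : Bool, free (Function.update ρ i (some w)) = free ρ - 1 := by
        intro w
        unfold free
        rw [hfilt w, Finset.card_erase_of_mem hifree]
      have hfree2 : 2 ≤ free ρ := by omega
      have hfixT0 : fixT (Function.update ρ i (some false)) = fixT ρ := by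
        unfold fixT
        congr 1
        ext j
        rcases eq_or_ne j i with rfl | hji
        · simp [Function.update_self, hρi]
        · simp [Function.update_of_ne hji]
      have hfixT1 : fixT (Function.update ρ i (some true)) = fixT ρ + 1 := by
        unfold fixT
        have he : (Finset.univ.filter fun j => Function.update ρ i (some true) j = some true)
            = insert i (Finset.univ.filter fun j => ρ j = some true) := by
          ext j
          rcases eq_or_ne j i with rfl | hji
          · simp [Function.update_self]
          · simp [Function.update_of_ne hji, hji]
        rw [he, Finset.card_insert_of_notMem (by simp [hρi])]
      have hAgr_up : ∀ (w : Bool) X, Agr (Function.update ρ i (some w)) X →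
          Agr ρ X ∧ X i = w := by
        intro w X h
        constructor
        · intro j v hj
          rcases eq_or_ne j i with rfl | hji
          · rw [hρi] at hj
            exact nomatch hj
          · exact h j v (by rw [Function.update_of_ne hji]; exact hj)
        · exact h i w (by rw [Function.update_self])
      have hAgr_down : ∀ (w : Bool) X, Agr ρ X → X i = w →
          Agr (Function.update ρ i (some w)) X := by
        intro w X h hXi j v hj
        rcases eq_or_ne j i with rfl | hji
        · rw [Function.update_self] at hj
          cases hj
          exact hXi
        · exact h j v (by rwa [Function.update_of_ne hji] at hj)
      have hevb : ∀ (X : Fin N → Bool) (w : Bool), X i = w →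
          (ODTree.node i t0 t1).eval X = (if w then t1 else t0).eval X := by
        intro X w hXi
        cases w <;> simp [ODTree.eval, hXi]
      have hsubset : (Finset.univ.filter fun X => Agr ρ X ∧ (cT X = t ∨ cT X = t - 1) ∧
            (ODTree.node i t0 t1).eval X ≠ none)
          ⊆ (Finset.univ.filter fun X => Agr (Function.update ρ i (some false)) X ∧
              (cT X = t ∨ cT X = t - 1) ∧ t0.eval X ≠ none)
            ∪ (Finset.univ.filter fun X => Agr (Function.update ρ i (some true)) X ∧
              (cT X = t ∨ cT X = t - 1) ∧ t1.eval X ≠ none) := by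
        intro X hX
        simp only [Finset.mem_filter, Finset.mem_univ, true_and, Finset.mem_union] at *
        obtain ⟨h1, h2, h3⟩ := hX
        cases hXi : X i with
        | false =>
          left
          refine ⟨hAgr_down false X h1 hXi, h2, ?_⟩
          rwa [hevb X false hXi] at h3
        | true =>
          right
          refine ⟨hAgr_down true X h1 hXi, h2, ?_⟩
          rwa [hevb X true hXi] at h3
      have hnw0 : ∀ X, Agr (Function.update ρ i (some false)) X →
          t0.eval X = some (maj X) ∨ t0.eval X = none := by
        intro X h
        obtain ⟨hA, hXi⟩ := hAgr_up false X h
        have := hnw X hA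
        rwa [hevb X false hXi] at this
      have hnw1 : ∀ X, Agr (Function.update ρ i (some true)) X →
          t1.eval X = some (maj X) ∨ t1.eval X = none := by
        intro X h
        obtain ⟨hA, hXi⟩ := hAgr_up true X h
        have := hnw X hA
        rwa [hevb X true hXi] at this
      have hb0 := ih0 (Function.update ρ i (some false)) hnw0
        (by rw [hfree_v]; omega)
      have hb1 := ih1 (Function.update ρ i (some true)) hnw1
        (by rw [hfree_v]; omega)
      rw [hfree_v, hfixT0] at hb0
      rw [hfree_v, hfixT1] at hb1
      have harg1 : (t:ℤ) - ((fixT ρ + 1 : ℕ) : ℤ) = (t:ℤ) - (fixT ρ) - 1 := by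
        push_cast
        ring
      have harg2 : (t:ℤ) - (fixT ρ) - 1 - 2 = (t:ℤ) - (fixT ρ) - 2 - 1 := by
        ring
      rw [harg1, harg2] at hb1
      have hpas : phi (free ρ - 1) ((t:ℤ) - fixT ρ) + phi (free ρ - 1) ((t:ℤ) - fixT ρ - 2)
          = (phi (free ρ - 1 - 1) ((t:ℤ) - fixT ρ) + phi (free ρ - 1 - 1) ((t:ℤ) - fixT ρ - 2))
            + (phi (free ρ - 1 - 1) ((t:ℤ) - fixT ρ - 1)
               + phi (free ρ - 1 - 1) ((t:ℤ) - fixT ρ - 2 - 1)) := by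
        obtain ⟨m, hm⟩ : ∃ m, free ρ - 1 = m + 1 := ⟨free ρ - 2, by omega⟩
        rw [hm]
        simp only [Nat.add_sub_cancel]
        rw [phi_pascal, phi_pascal]
        ring
      calc (Finset.univ.filter fun X => Agr ρ X ∧ (cT X = t ∨ cT X = t - 1) ∧
            (ODTree.node i t0 t1).eval X ≠ none).card
          ≤ _ := Finset.card_le_card hsubset
        _ ≤ _ := Finset.card_union_le _ _
        _ ≤ (phi (free ρ - 1 - 1) ((t:ℤ) - fixT ρ) + phi (free ρ - 1 - 1) ((t:ℤ) - fixT ρ - 2))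
            + (phi (free ρ - 1 - 1) ((t:ℤ) - fixT ρ - 1)
               + phi (free ρ - 1 - 1) ((t:ℤ) - fixT ρ - 2 - 1)) := add_le_add hb0 hb1
        _ = phi (free ρ - 1) ((t:ℤ) - fixT ρ) + phi (free ρ - 1) ((t:ℤ) - fixT ρ - 2) :=
            hpas.symm

lemma phi_natCast (n m : ℕ) : phi n (m : ℤ) = n.choose m := by
  simp [phi]

lemma choose_lt_succ {n r : ℕ} (h : 2*r + 1 < n) : n.choose r < n.choose (r+1) := by
  have hpos : 0 < n.choose r := Nat.choose_pos (by omega)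
  have he := Nat.choose_succ_right_eq n r
  have hlt : r + 1 < n - r := by omega
  have h2 : n.choose r * (r + 1) < n.choose (r+1) * (r + 1) := by
    rw [he]
    exact mul_lt_mul_of_pos_left hlt hpos
  exact Nat.lt_of_mul_lt_mul_right h2

lemma key_lt {M t : ℕ} (hM : 1 ≤ M) (ht1 : M ≤ 2*t) (ht2 : 2*t ≤ M+1) :
    2 * (phi (M-1) (t:ℤ) + phi (M-1) ((t:ℤ)-2)) < M.choose t + M.choose (t-1) := by
  have htpos : 1 ≤ t := by omega
  rcases Nat.lt_or_ge t 2 with ht | ht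
  · -- t = 1, M ∈ {1,2}
    have h1 : t = 1 := by omega
    subst h1
    have hphi : phi (M-1) ((1:ℤ)-2) = 0 := by simp [phi]
    interval_cases M <;> simp_all [phi_natCast] <;> decide
  · obtain ⟨s, rfl⟩ : ∃ s, t = s + 2 := ⟨t - 2, by omega⟩
    have hc1 : phi (M-1) ((s+2:ℕ):ℤ) = (M-1).choose (s+2) := phi_natCast _ _
    have hc2' : ((s+2:ℕ):ℤ) - 2 = ((s:ℕ):ℤ) := by push_cast; ring
    have hc2 : phi (M-1) (((s+2:ℕ):ℤ) - 2) = (M-1).choose s := by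
      rw [hc2', phi_natCast]
    rw [hc1, hc2]
    have he3 : (s+2) - 1 = s + 1 := by omega
    rw [he3]
    rcases (by omega : M = 2*(s+2) ∨ M + 1 = 2*(s+2)) with h | h
    · -- even case: M = 2s+4
      have e0 : M = 2*s+4 := by omega
      subst e0
      have e1 : 2*s+4 - 1 = 2*s+3 := by omega
      rw [e1]
      have p1 : (2*s+4).choose (s+2) = (2*s+3).choose (s+1) + (2*s+3).choose (s+2) :=
        Nat.choose_succ_succ' (2*s+3) (s+1)
      have p2 : (2*s+4).choose (s+1) = (2*s+3).choose s + (2*s+3).choose (s+1) :=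
        Nat.choose_succ_succ' (2*s+3) s
      have hsym : (2*s+3).choose (s+2) = (2*s+3).choose (s+1) := by
        have := Nat.choose_symm_half (s+1)
        simpa [show 2*(s+1)+1 = 2*s+3 from by ring] using this
      have hstr : (2*s+3).choose s < (2*s+3).choose (s+1) := choose_lt_succ (by omega)
      omega
    · -- odd case: M = 2s+3
      have e0 : M = 2*s+3 := by omega
      subst e0
      have e1 : 2*s+3 - 1 = 2*s+2 := by omega
      rw [e1]
      have p1 : (2*s+3).choose (s+2) = (2*s+2).choose (s+1) + (2*s+2).choose (s+2) :=
        Nat.choose_succ_succ' (2*s+2) (s+1)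
      have p2 : (2*s+3).choose (s+1) = (2*s+2).choose s + (2*s+2).choose (s+1) :=
        Nat.choose_succ_succ' (2*s+2) s
      have hsym : (2*s+2).choose s = (2*s+2).choose (s+2) := by
        have := Nat.choose_symm (n := 2*s+2) (k := s+2) (by omega)
        simpa [show 2*s+2 - (s+2) = s from by omega] using this
      have hstr : (2*s+2).choose s < (2*s+2).choose (s+1) := choose_lt_succ (by omega)
      omega

lemma card_levels {t : ℕ} (ht : 1 ≤ t) :
    N.choose t + N.choose (t-1) ≤
      (Finset.univ.filter fun X : Fin N → Bool => cT X = t ∨ cT X = t - 1).card := by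
  classical
  have hcT : ∀ s : Finset (Fin N), cT (fun i => decide (i ∈ s)) = s.card := by
    intro s
    unfold cT
    congr 1
    ext i
    simp
  have hmaps : ∀ s ∈ (Finset.univ.powersetCard t ∪ Finset.univ.powersetCard (t-1) :
      Finset (Finset (Fin N))),
      (fun i => decide (i ∈ s)) ∈ (Finset.univ.filter fun X : Fin N → Bool =>
        cT X = t ∨ cT X = t - 1) := by
    intro s hs
    simp only [Finset.mem_union, Finset.mem_powersetCard] at hs
    simp only [Finset.mem_filter, Finset.mem_univ, true_and, hcT]
    rcases hs with h | h
    · exact Or.inl h.2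
    · exact Or.inr h.2
  have hinj : Set.InjOn (fun s : Finset (Fin N) => fun i => decide (i ∈ s))
      ((Finset.univ.powersetCard t ∪ Finset.univ.powersetCard (t-1) :
        Finset (Finset (Fin N))) : Set (Finset (Fin N))) := by
    intro s1 _ s2 _ h
    ext i
    have := congrFun h i
    simpa using this
  have hcard := Finset.card_le_card_of_injOn _ hmaps hinj
  have hdisj : Disjoint (Finset.univ.powersetCard t : Finset (Finset (Fin N)))
      (Finset.univ.powersetCard (t-1)) := by
    rw [Finset.disjoint_left]
    intro s h1 h2
    simp only [Finset.mem_powersetCard] at h1 h2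
    omega
  rw [Finset.card_union_of_disjoint hdisj, Finset.card_powersetCard,
    Finset.card_powersetCard, Finset.card_univ, Fintype.card_fin] at hcard
  exact hcard

end ODTreeAux

open scoped ENNReal NNReal

open ODTreeAux

/-- Any randomized decision tree computing MAJORITY on N bits with zero-sided
error at most 1/2 (on every input it answers correctly with probability at
least 1/2 and otherwise says "I don't know", never answering wrongly) has
cost at least N: some tree in its support has depth at least N. -/
theorem stmt_13 (N : ℕ) (𝒯 : PMF (ODTree N))
    (hcorrect : ∀ X : Fin N → Bool,
      1 - 1 / 2 ≤ 𝒯.toOuterMeasure {T | T.eval X =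
        some (decide ((Finset.univ.filter fun i => X i = false).card ≤
                      (Finset.univ.filter fun i => X i = true).card))})
    (hnever : ∀ X : Fin N → Bool, ∀ T ∈ 𝒯.support,
      T.eval X = some (decide ((Finset.univ.filter fun i => X i = false).card ≤
                               (Finset.univ.filter fun i => X i = true).card)) ∨
      T.eval X = none) :
    ∃ T ∈ 𝒯.support, N ≤ T.cost := by
  classical
  by_contra hcon
  push_neg at hcon
  obtain ⟨T₀, hT₀⟩ := 𝒯.support_nonempty
  have hN : 1 ≤ N := by
    have := hcon T₀ hT₀
    omega
  set t : ℕ := (N+1)/2 with htdef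
  have ht1 : N ≤ 2*t := by omega
  have ht2 : 2*t ≤ N+1 := by omega
  set L : Finset (Fin N → Bool) :=
    Finset.univ.filter (fun X : Fin N → Bool => cT X = t ∨ cT X = t - 1) with hLdef
  set Φ : ℕ := phi (N-1) (t:ℤ) + phi (N-1) ((t:ℤ)-2) with hΦdef
  -- per-tree counting bound
  have hcount : ∀ T ∈ 𝒯.support,
      (L.filter fun X => T.eval X = some (maj X)).card ≤ Φ := by
    intro T hT
    have hfree : free (fun _ : Fin N => (none : Option Bool)) = N := by
      simp [free]
    have hfix : fixT (fun _ : Fin N => (none : Option Bool)) = 0 := by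
      simp [fixT]
    have hsub : (L.filter fun X => T.eval X = some (maj X)) ⊆
        (Finset.univ.filter fun X => Agr (fun _ => (none : Option Bool)) X ∧
          (cT X = t ∨ cT X = t - 1) ∧ T.eval X ≠ none) := by
      intro X hX
      simp only [hLdef, Finset.filter_filter, Finset.mem_filter, Finset.mem_univ,
        true_and] at hX ⊢
      refine ⟨fun i v h => by simp at h, hX.1, ?_⟩
      rw [hX.2]
      simp
    have hnw : ∀ X, Agr (fun _ => (none : Option Bool)) X →
        T.eval X = some (maj X) ∨ T.eval X = none := fun X _ => hnever X T hT
    have h2 := main_bound T t ht1 ht2 (fun _ => none) hnw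
      (by rw [hfree]; exact hcon T hT)
    rw [hfree, hfix] at h2
    have e : ((t:ℤ) - ((0:ℕ):ℤ)) = (t:ℤ) := by push_cast; ring
    rw [e] at h2
    exact le_trans (Finset.card_le_card hsub) h2
  -- averaging
  have h12 : (1 : ℝ≥0∞) - 1 / 2 = 1 / 2 := ENNReal.sub_half ENNReal.one_ne_top
  have hXle : ∀ X : Fin N → Bool,
      (1/2 : ℝ≥0∞) ≤ 𝒯.toOuterMeasure {T | T.eval X = some (maj X)} := by
    intro X
    rw [← h12]
    exact hcorrect X
  have hstep : ∀ T : ODTree N,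
      ∑ X ∈ L, Set.indicator {T' : ODTree N | T'.eval X = some (maj X)} 𝒯 T
        ≤ 𝒯 T * (Φ : ℝ≥0∞) := by
    intro T
    have hind : ∀ X : Fin N → Bool,
        Set.indicator {T' : ODTree N | T'.eval X = some (maj X)} 𝒯 T
          = if T.eval X = some (maj X) then 𝒯 T else 0 := by
      intro X
      simp [Set.indicator_apply, Set.mem_setOf_eq]
    simp only [hind]
    rw [Finset.sum_ite, Finset.sum_const, Finset.sum_const_zero, add_zero, nsmul_eq_mul]
    by_cases h0 : 𝒯 T = 0
    · simp [h0]
    · have hT : T ∈ 𝒯.support := by rwa [PMF.mem_support_iff]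
      have hc := hcount T hT
      calc ((L.filter fun X => T.eval X = some (maj X)).card : ℝ≥0∞) * 𝒯 T
          ≤ (Φ : ℝ≥0∞) * 𝒯 T := by
            apply mul_le_mul_left
            exact_mod_cast hc
        _ = 𝒯 T * (Φ : ℝ≥0∞) := mul_comm _ _
  have hmain : (L.card : ℝ≥0∞) * (1/2) ≤ (Φ : ℝ≥0∞) := by
    calc (L.card : ℝ≥0∞) * (1/2) = ∑ _X ∈ L, (1/2 : ℝ≥0∞) := by
          rw [Finset.sum_const, nsmul_eq_mul]
      _ ≤ ∑ X ∈ L, 𝒯.toOuterMeasure {T : ODTree N | T.eval X = some (maj X)} :=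
          Finset.sum_le_sum fun X _ => hXle X
      _ = ∑ X ∈ L, ∑' T : ODTree N,
            Set.indicator {T' : ODTree N | T'.eval X = some (maj X)} 𝒯 T := by
          refine Finset.sum_congr rfl fun X _ => ?_
          exact PMF.toOuterMeasure_apply 𝒯 _
      _ = ∑' T : ODTree N, ∑ X ∈ L,
            Set.indicator {T' : ODTree N | T'.eval X = some (maj X)} 𝒯 T :=
          (Summable.tsum_finsetSum fun _ _ => ENNReal.summable).symm
      _ ≤ ∑' T : ODTree N, 𝒯 T * (Φ : ℝ≥0∞) := ENNReal.tsum_le_tsum hstep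
      _ = (Φ : ℝ≥0∞) := by rw [ENNReal.tsum_mul_right, 𝒯.tsum_coe, one_mul]
  have h2Φ : (L.card : ℝ≥0∞) ≤ ((2*Φ : ℕ) : ℝ≥0∞) := by
    have hm := mul_le_mul_left hmain (2 : ℝ≥0∞)
    rw [mul_assoc] at hm
    have h122 : (1/2 : ℝ≥0∞) * 2 = 1 :=
      ENNReal.div_mul_cancel (by norm_num) (by norm_num)
    rw [h122, mul_one] at hm
    calc (L.card : ℝ≥0∞) ≤ (Φ : ℝ≥0∞) * 2 := hm
      _ = ((2*Φ : ℕ) : ℝ≥0∞) := by push_cast; ring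
  have hle : L.card ≤ 2*Φ := by exact_mod_cast h2Φ
  have hlow : N.choose t + N.choose (t-1) ≤ L.card := card_levels (by omega)
  have hstrict : 2 * Φ < N.choose t + N.choose (t-1) := key_lt hN ht1 ht2
  omega
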